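/- The Euler allocation of IMCC is a full allocation (Proposition 3.4): Let N be a positive integer and for each i ∈ Fin 6 and j ∈ Fin 5 let g_{ij} : (Fin N → ℝ) → ℝ be positively homogeneous of degree 1 and Fréchet differentiable at the all-ones vector 𝟙. Set ES(i) = sqrt(∑_{j ∈ Fin 5} g_{ij}(𝟙)²) and assume ES(i) ≠ 0 for every i ∈ Fin 6. Given real numbers s_i (the stress-period scaling factors), define the Euler allocation of IMCC by IMCC^E_n(i,j) = 0.5 · s_i · (g_{ij}(𝟙)/ES(i)) · (fderiv ℝ g_{ij} 𝟙)(e_n). Then ∑_{n ∈ Fin N} ∑_{i ∈ Fin 6} ∑_{j ∈ Fin 5} IMCC^E_n(i,j) = 0.5 · ∑_{i ∈ Fin 6} s_i · ES(i). -/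

import Mathlib

lemma euler_hom_fderiv {N : ℕ} (f : (Fin N → ℝ) → ℝ)
    (hhom : ∀ (a : ℝ), 0 ≤ a → ∀ v : Fin N → ℝ, f (a • v) = a * f v)
    (hdiff : DifferentiableAt ℝ f (1 : Fin N → ℝ)) :
    (fderiv ℝ f (1 : Fin N → ℝ)) (1 : Fin N → ℝ) = f 1 := by
  have hφ : HasDerivAt (fun a : ℝ => a • (1 : Fin N → ℝ)) (1 : Fin N → ℝ) 1 := by
    simpa using (hasDerivAt_id (1:ℝ)).smul_const (1 : Fin N → ℝ)
  have hcomp : HasDerivAt (fun a : ℝ => f (a • (1 : Fin N → ℝ)))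
      ((fderiv ℝ f (1 : Fin N → ℝ)) (1 : Fin N → ℝ)) 1 := by
    have h1 : HasFDerivAt f (fderiv ℝ f 1) ((1:ℝ) • (1 : Fin N → ℝ)) := by
      simpa using hdiff.hasFDerivAt
    exact (h1.comp_hasDerivAt 1 hφ)
  have heq : (fun a : ℝ => f (a • (1 : Fin N → ℝ))) =ᶠ[nhds (1:ℝ)]
      (fun a : ℝ => a * f 1) := by
    filter_upwards [eventually_gt_nhds (by norm_num : (0:ℝ) < 1)] with a ha
    exact hhom a ha.le 1
  have hcomp' : HasDerivAt (fun a : ℝ => a * f 1)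
      ((fderiv ℝ f (1 : Fin N → ℝ)) (1 : Fin N → ℝ)) 1 := hcomp.congr_of_eventuallyEq heq.symm
  have h2 : HasDerivAt (fun a : ℝ => a * f 1) (f 1) 1 := by
    simpa using (hasDerivAt_id (1:ℝ)).mul_const (f 1)
  exact hcomp'.unique h2

/-- The Euler allocation of IMCC is a full allocation (Proposition 3.4). -/
theorem euler_allocation_full {N : ℕ} (hN : 0 < N)
    (g : Fin 6 → Fin 5 → (Fin N → ℝ) → ℝ)
    (hhom : ∀ i j, ∀ (a : ℝ), 0 ≤ a → ∀ v : Fin N → ℝ, g i j (a • v) = a * g i j v)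
    (hdiff : ∀ i j, DifferentiableAt ℝ (g i j) (1 : Fin N → ℝ))
    (hES : ∀ i, Real.sqrt (∑ j, (g i j (1 : Fin N → ℝ)) ^ 2) ≠ 0)
    (s : Fin 6 → ℝ) :
    ∑ n : Fin N, ∑ i : Fin 6, ∑ j : Fin 5,
        0.5 * s i * (g i j (1 : Fin N → ℝ) / Real.sqrt (∑ k, (g i k (1 : Fin N → ℝ)) ^ 2))
          * (fderiv ℝ (g i j) (1 : Fin N → ℝ)) (Pi.single n 1)
      = 0.5 * ∑ i : Fin 6, s i * Real.sqrt (∑ j, (g i j (1 : Fin N → ℝ)) ^ 2) := by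
  rw [Finset.sum_comm]
  have key : ∀ i j, ∑ n : Fin N,
      (fderiv ℝ (g i j) (1 : Fin N → ℝ)) (Pi.single n 1) = g i j 1 := by
    intro i j
    rw [← map_sum]
    have : (∑ n : Fin N, Pi.single n (1:ℝ)) = (1 : Fin N → ℝ) := by
      ext m; simp [Finset.sum_apply, Pi.single_apply]
    rw [this]
    exact euler_hom_fderiv (g i j) (hhom i j) (hdiff i j)
  calc ∑ i : Fin 6, ∑ n : Fin N, ∑ j : Fin 5,
        0.5 * s i * (g i j (1 : Fin N → ℝ) / Real.sqrt (∑ k, (g i k (1 : Fin N → ℝ)) ^ 2))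
          * (fderiv ℝ (g i j) (1 : Fin N → ℝ)) (Pi.single n 1)
      = ∑ i : Fin 6, ∑ j : Fin 5,
        0.5 * s i * (g i j (1 : Fin N → ℝ) / Real.sqrt (∑ k, (g i k (1 : Fin N → ℝ)) ^ 2))
          * g i j 1 := by
        refine Finset.sum_congr rfl fun i _ => ?_
        rw [Finset.sum_comm]
        refine Finset.sum_congr rfl fun j _ => ?_
        rw [← Finset.mul_sum, key i j]
    _ = 0.5 * ∑ i : Fin 6, s i * Real.sqrt (∑ j, (g i j (1 : Fin N → ℝ)) ^ 2) := by
        rw [Finset.mul_sum]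
        refine Finset.sum_congr rfl fun i _ => ?_
        set E := Real.sqrt (∑ k, (g i k (1 : Fin N → ℝ)) ^ 2) with hE
        have hsum : ∑ j, (g i j (1 : Fin N → ℝ)) ^ 2 = E ^ 2 := by
          rw [hE, Real.sq_sqrt]
          positivity
        have : ∑ j : Fin 5, 0.5 * s i * (g i j (1 : Fin N → ℝ) / E) * g i j 1
            = 0.5 * s i / E * ∑ j, (g i j (1 : Fin N → ℝ)) ^ 2 := by
          rw [Finset.mul_sum]; refine Finset.sum_congr rfl fun j _ => ?_; ring
        rw [this, hsum]
        field_simp [hES i]
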